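/- arXiv:1404.7571 — 3 statements merged into one kernel-verified Lean document; each statement's English description precedes it below -/
import Mathlib

section
/- Let ε be a real with 0 < ε ≤ 1, let W > 0 and Ŵ > 0 be reals, let f be a real with 0 ≤ f ≤ W, and let Ŵe ≥ 0 be a real. If |f − Ŵe| ≤ (ε/6)·W and |W − Ŵ| ≤ (ε/5)·W, then |Ŵe/Ŵ − f/W| ≤ ε/2. -/
/-- The key inequality of Lemma 1: an additive `(ε/6)·W`-accurate frequency estimate `We`
together with an `(ε/5)·W`-accurate total-weight estimate `Wh` yields an `ε/2`-accurate
estimate of the relative frequency `f / W`. -/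
theorem stmt_0 (ε W Wh f We : ℝ) (hε0 : 0 < ε) (hε1 : ε ≤ 1)
    (hW : 0 < W) (hWh : 0 < Wh) (hf0 : 0 ≤ f) (hfW : f ≤ W) (hWe : 0 ≤ We)
    (h1 : |f - We| ≤ (ε / 6) * W) (h2 : |W - Wh| ≤ (ε / 5) * W) :
    |We / Wh - f / W| ≤ ε / 2 := by
  obtain ⟨h1a, h1b⟩ := abs_le.mp h1
  obtain ⟨h2a, h2b⟩ := abs_le.mp h2
  have hWh4 : (4/5) * W ≤ Wh := by nlinarith
  rw [div_sub_div _ _ (ne_of_gt hWh) (ne_of_gt hW), abs_div,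
    abs_of_pos (mul_pos hWh hW), div_le_iff₀ (mul_pos hWh hW)]
  rw [abs_le]
  constructor <;>
    nlinarith [mul_le_mul_of_nonneg_right h1b hW.le, mul_le_mul_of_nonneg_right h1a hW.le,
      mul_le_mul_of_nonneg_left h2b hf0, mul_le_mul_of_nonneg_left h2a hf0,
      mul_le_mul_of_nonneg_right hWh4 (by positivity : (0:ℝ) ≤ ε * W),
      mul_le_mul_of_nonneg_left hfW (by positivity : (0:ℝ) ≤ ε / 5 * W)]
end

section
/- Let ε be a real with 0 < ε ≤ 1, let φ ∈ [0,1], let W > 0 and Ŵ > 0 be reals, let f be a real with 0 ≤ f ≤ W, and let Ŵe ≥ 0 be a real satisfying |f − Ŵe| ≤ (ε/6)·W and |W − Ŵ| ≤ (ε/5)·W. Then: (a) if f ≥ φ·W then Ŵe/Ŵ ≥ φ − ε/2; and (b) if Ŵe/Ŵ ≥ φ − ε/2 then f ≥ (φ − ε)·W. -/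
/-- Heavy-hitter classification guarantee of Lemma 1: (a) every true `φ`-heavy hitter is
returned by the threshold test `We / Wh ≥ φ - ε/2`, and (b) every returned element has
true frequency at least `(φ - ε)·W`. -/
theorem stmt_1 (ε φ W Wh f We : ℝ) (hε0 : 0 < ε) (hε1 : ε ≤ 1)
    (hφ0 : 0 ≤ φ) (hφ1 : φ ≤ 1)
    (hW : 0 < W) (hWh : 0 < Wh) (hf0 : 0 ≤ f) (hfW : f ≤ W) (hWe : 0 ≤ We)
    (h1 : |f - We| ≤ (ε / 6) * W) (h2 : |W - Wh| ≤ (ε / 5) * W) :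
    (f ≥ φ * W → We / Wh ≥ φ - ε / 2) ∧
    (We / Wh ≥ φ - ε / 2 → f ≥ (φ - ε) * W) := by
  obtain ⟨h1a, h1b⟩ := abs_le.mp h1
  obtain ⟨h2a, h2b⟩ := abs_le.mp h2
  constructor
  · intro h
    rw [ge_iff_le, le_div_iff₀ hWh]
    rcases le_or_gt (φ - ε / 2) 0 with hneg | hpos
    · nlinarith
    · nlinarith [mul_le_mul_of_nonneg_left h2b hpos.le, mul_pos hε0 hW]
  · intro h
    rw [ge_iff_le, le_div_iff₀ hWh] at h
    rcases le_or_gt (φ - ε / 2) 0 with hneg | hpos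
    · nlinarith
    · nlinarith [mul_le_mul_of_nonneg_left h2a hpos.le, mul_pos hε0 hW]
end

section
/- Let ε ≥ 0 and m ≥ 1. Let B be a real ℓ × d matrix and B_1,…,B_m real matrices each with d columns, and let A be the matrix whose rows are the rows of B together with all rows of B_1,…,B_m (stacked). Suppose that for each j ∈ {1,…,m}, every eigenvalue of the symmetric matrix B_jᵀB_j is at most (ε/m)·‖A‖_F². Then for every x ∈ ℝ^d with ‖x‖ = 1: ‖A x‖² − ε·‖A‖_F² ≤ ‖B x‖² ≤ ‖A x‖². -/
open Matrix

lemma quad_le_of_eig (n : ℕ) (M : Matrix (Fin n) (Fin n) ℝ) (hM : M.IsHermitian)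
    (c : ℝ) (hc : ∀ i, hM.eigenvalues i ≤ c)
    (x : Fin n → ℝ) (hx : x ⬝ᵥ x = 1) : x ⬝ᵥ M *ᵥ x ≤ c := by
  have hU : (hM.eigenvectorUnitary : Matrix (Fin n) (Fin n) ℝ) ∈ unitary _ :=
    hM.eigenvectorUnitary.2
  obtain ⟨h1, h2⟩ := Unitary.mem_iff.mp hU
  set U : Matrix (Fin n) (Fin n) ℝ := (hM.eigenvectorUnitary : Matrix (Fin n) (Fin n) ℝ) with hUdef
  have hstar : star U = Uᵀ := by
    ext i j; simp [star_eq_conjTranspose, conjTranspose_apply]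
  have hUU : U * Uᵀ = 1 := by rw [← hstar]; exact h2
  have hyy : (Uᵀ *ᵥ x) ⬝ᵥ (Uᵀ *ᵥ x) = 1 := by
    rw [dotProduct_mulVec, mulVec_transpose, vecMul_vecMul, hUU, vecMul_one, hx]
  have hquad : x ⬝ᵥ M *ᵥ x = ∑ i, hM.eigenvalues i * ((Uᵀ *ᵥ x) i)^2 := by
    conv_lhs => rw [hM.spectral_theorem, Unitary.conjStarAlgAut_apply]
    rw [hstar, ← hUdef, ← mulVec_mulVec, ← mulVec_mulVec, dotProduct_mulVec, mulVec_transpose]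
    simp [dotProduct, mulVec_diagonal, RCLike.ofReal_real_eq_id, mulVec_transpose]
    exact Finset.sum_congr rfl fun i _ => by ring
  rw [hquad]
  calc ∑ i, hM.eigenvalues i * ((Uᵀ *ᵥ x) i)^2 ≤ ∑ i, c * ((Uᵀ *ᵥ x) i)^2 :=
        Finset.sum_le_sum fun i _ => mul_le_mul_of_nonneg_right (hc i) (sq_nonneg _)
    _ = c := by
        rw [← Finset.mul_sum]
        have : ∑ i, ((Uᵀ *ᵥ x) i)^2 = 1 := by rw [← hyy]; simp [dotProduct, sq]
        rw [this, mul_one]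

/-- The invariant of the deterministic matrix-tracking protocol P2: if `A` is the stacking of
the coordinator's matrix `B` with the residual site matrices `B_1, …, B_m`, and every
eigenvalue of each `B_jᵀB_j` (i.e. each squared singular value of `B_j`) is at most
`(ε/m)·‖A‖_F²`, then for every unit vector `x`,
`‖Ax‖² - ε‖A‖_F² ≤ ‖Bx‖² ≤ ‖Ax‖²`. -/
theorem stmt_8 (ε : ℝ) (hε : 0 ≤ ε) (m : ℕ) (hm : 1 ≤ m)
    (ℓ d : ℕ) (k : Fin m → ℕ)
    (B : Matrix (Fin ℓ) (Fin d) ℝ)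
    (Bs : ∀ j : Fin m, Matrix (Fin (k j)) (Fin d) ℝ)
    (A : Matrix (Fin ℓ ⊕ (Σ j : Fin m, Fin (k j))) (Fin d) ℝ)
    (hA : A = Matrix.fromRows B (Matrix.of fun (p : Σ j : Fin m, Fin (k j)) => Bs p.1 p.2))
    (hherm : ∀ j : Fin m, ((Bs j)ᵀ * Bs j).IsHermitian)
    (heval : ∀ (j : Fin m) (i : Fin d),
      (hherm j).eigenvalues i ≤ (ε / m) * ∑ a, ∑ b, (A a b) ^ 2) :
    ∀ x : Fin d → ℝ, (∑ c, (x c) ^ 2) = 1 →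
      (∑ a, (A.mulVec x a) ^ 2) - ε * (∑ a, ∑ b, (A a b) ^ 2) ≤ ∑ i, (B.mulVec x i) ^ 2 ∧
      (∑ i, (B.mulVec x i) ^ 2) ≤ ∑ a, (A.mulVec x a) ^ 2 := by
  intro x hx
  set F : ℝ := ∑ a, ∑ b, (A a b) ^ 2 with hF
  have hx' : x ⬝ᵥ x = 1 := by rw [← hx]; simp [dotProduct, sq]
  have hsplit : (∑ a, (A.mulVec x a) ^ 2)
      = (∑ i, (B.mulVec x i) ^ 2) + ∑ j, ∑ i, ((Bs j).mulVec x i) ^ 2 := by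
    subst hA
    rw [Fintype.sum_sum_type]
    simp only [fromRows_mulVec, Sum.elim_inl, Sum.elim_inr]
    congr 1
    rw [← Finset.univ_sigma_univ, Finset.sum_sigma]
    exact Finset.sum_congr rfl fun p _ => by simp [mulVec]
  have hquad : ∀ j : Fin m, (∑ i, ((Bs j).mulVec x i) ^ 2)
      = x ⬝ᵥ ((Bs j)ᵀ * Bs j) *ᵥ x := by
    intro j
    rw [← mulVec_mulVec, dotProduct_mulVec, vecMul_transpose]
    simp [dotProduct, sq]
  have hbound : ∀ j : Fin m, (∑ i, ((Bs j).mulVec x i) ^ 2) ≤ (ε / m) * F := by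
    intro j
    rw [hquad j]
    exact quad_le_of_eig d _ (hherm j) _ (heval j) x hx'
  have hm0 : (m : ℝ) ≠ 0 := by positivity
  have hsum_le : (∑ j, ∑ i, ((Bs j).mulVec x i) ^ 2) ≤ ε * F := by
    calc (∑ j : Fin m, ∑ i, ((Bs j).mulVec x i) ^ 2) ≤ ∑ _j : Fin m, (ε / m) * F :=
          Finset.sum_le_sum fun j _ => hbound j
      _ = (m : ℝ) * ((ε / m) * F) := by simp [Finset.sum_const, mul_comm]
      _ = ε * F := by field_simp
  have hnonneg : (0 : ℝ) ≤ ∑ j, ∑ i, ((Bs j).mulVec x i) ^ 2 :=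
    Finset.sum_nonneg fun j _ => Finset.sum_nonneg fun i _ => sq_nonneg _
  constructor
  · rw [hsplit]; linarith
  · rw [hsplit]; linarith
end
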